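/- The only strict partition satisfying the −2 shift condition is the empty partition; i.e., no nonempty strict partition λ = (λ_1 > … > λ_k > 0) has the property that for every μ ∈ V_λ either μ − 2 ∈ V_λ or μ − 2 ≤ 0. -/
import Mathlib


/-- We encode a strict partition `λ = (λ_1 > λ_2 > ⋯ > λ_k > 0)` as the finite set
`S` of its (positive, distinct) parts; its largest part `λ_1` is `S.sup id`.
`VSet S` is the set `V_λ = {λ_1 + λ_i + 1 : 1 ≤ i ≤ k} ∪
{λ_1 - j + 1 : 0 < j < λ_1, j not a part of λ}`. -/
def VSet (S : Finset ℕ) : Set ℕ :=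
  {μ | ∃ i ∈ S, μ = S.sup id + i + 1} ∪
    {μ | ∃ j : ℕ, 0 < j ∧ j < S.sup id ∧ j ∉ S ∧ μ = S.sup id - j + 1}

/-- The `-n` shift condition on a strict partition `λ` (encoded as the finite set `S` of
its parts): for every `μ ∈ V_λ`, either `μ - n ∈ V_λ` or `μ - n ≤ 0`. -/
def ShiftCondition (n : ℕ) (S : Finset ℕ) : Prop :=
  ∀ μ ∈ VSet S, μ - n ∈ VSet S ∨ μ ≤ n

lemma mem_VSet {S : Finset ℕ} {μ : ℕ} :
    μ ∈ VSet S ↔ (∃ i ∈ S, μ = S.sup id + i + 1) ∨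
      ∃ j : ℕ, 0 < j ∧ j < S.sup id ∧ j ∉ S ∧ μ = S.sup id - j + 1 := Iff.rfl

/-- no nonempty strict partition satisfies the `-2` shift condition. -/
theorem no_nonempty_strict_partition_shift_two (S : Finset ℕ) (hpos : ∀ x ∈ S, 0 < x)
    (hne : S.Nonempty) : ¬ ShiftCondition 2 S := by
  intro h
  set m := S.sup id with hmdef
  obtain ⟨b, hb, hbm⟩ := Finset.exists_mem_eq_sup S hne id
  have hmS : m ∈ S := by rw [hmdef, hbm]; exact hb
  have hm1 : 1 ≤ m := hpos m hmS
  -- 2 cannot be a part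
  have h2 : 2 ∉ S := by
    intro h2S
    have hμ : (m + 2 + 1 : ℕ) ∈ VSet S := Or.inl ⟨2, h2S, rfl⟩
    rcases h _ hμ with hv | hle
    · rcases mem_VSet.mp hv with ⟨i, hiS, hi⟩ | ⟨j, hj0, hjm, hjS, hj⟩
      · have := hpos i hiS; omega
      · omega
    · omega
  -- descending: every part leads down to 1 ∈ S
  have h1 : ∀ i, i ∈ S → 1 ∈ S := by
    intro i
    induction i using Nat.strong_induction_on with
    | _ i ih =>
      intro hiS
      have hi1 : 1 ≤ i := hpos i hiS
      rcases Nat.lt_or_ge i 3 with hlt | hge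
      · interval_cases i
        · exact hiS
        · exact absurd hiS h2
      · -- i ≥ 3 : show i - 2 ∈ S
        have hμ : (m + i + 1 : ℕ) ∈ VSet S := Or.inl ⟨i, hiS, rfl⟩
        rcases h _ hμ with hv | hle
        · rcases mem_VSet.mp hv with ⟨i', hi'S, hi'⟩ | ⟨j, hj0, hjm, hjS, hj⟩
          · have : i' = i - 2 := by omega
            exact ih i' (by omega) hi'S
          · omega
        · omega
  have h1S : 1 ∈ S := h1 m hmS
  -- final contradiction with μ = m + 1 + 1
  have hμ : (m + 1 + 1 : ℕ) ∈ VSet S := Or.inl ⟨1, h1S, rfl⟩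
  rcases h _ hμ with hv | hle
  · rcases mem_VSet.mp hv with ⟨i, hiS, hi⟩ | ⟨j, hj0, hjm, hjS, hj⟩
    · have := hpos i hiS; omega
    · have : j = 1 := by omega
      exact hjS (this ▸ h1S)
  · omega
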